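/- Let n ≥ 2, μ > 0, ν₀ ≥ 0, η ≥ 0, S₀ ∈ ℝ. Then sup over t ≥ 0 of f(t) = S₀ + (4ν₀ t − 2((n−1)μ² S₀ + 4η)t²)/(1 + 2n(n−1)μ² t²) equals (1/(2n))·((2n−1)S₀ − 4η/((n−1)μ²) + √((S₀ + 4η/((n−1)μ²))² + (8n/(n−1))(ν₀/μ)²)). -/

import Mathlib

theorem sup_weyl_estimate_nonharmonic (n : ℕ) (hn : 2 ≤ n) (μ ν₀ η S₀ : ℝ)
    (hμ : 0 < μ) (hν₀ : 0 ≤ ν₀) (hη : 0 ≤ η) :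
    sSup {y : ℝ | ∃ t ≥ (0 : ℝ),
        y = S₀ + (4 * ν₀ * t - 2 * (((n : ℝ) - 1) * μ ^ 2 * S₀ + 4 * η) * t ^ 2) /
              (1 + 2 * (n : ℝ) * ((n : ℝ) - 1) * μ ^ 2 * t ^ 2)} =
      (1 / (2 * (n : ℝ))) * ((2 * (n : ℝ) - 1) * S₀ - 4 * η / (((n : ℝ) - 1) * μ ^ 2) +
        Real.sqrt ((S₀ + 4 * η / (((n : ℝ) - 1) * μ ^ 2)) ^ 2 +
          (8 * (n : ℝ) / ((n : ℝ) - 1)) * (ν₀ / μ) ^ 2)) := by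
  have hn2 : (2:ℝ) ≤ (n:ℝ) := by exact_mod_cast hn
  have hn0 : (0:ℝ) < (n:ℝ) := by linarith
  have hn1 : (0:ℝ) < (n:ℝ) - 1 := by linarith
  have hμ2 : (0:ℝ) < μ ^ 2 := by positivity
  set a : ℝ := ((n:ℝ) - 1) * μ ^ 2 with ha_def
  have ha : 0 < a := mul_pos hn1 hμ2
  set A : ℝ := S₀ + 4 * η / a with hA_def
  set B : ℝ := 8 * (n:ℝ) / ((n:ℝ) - 1) * (ν₀ / μ) ^ 2 with hB_def
  have hB : 0 ≤ B := by
    rw [hB_def]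
    exact mul_nonneg (div_nonneg (by positivity) hn1.le) (sq_nonneg _)
  set R : ℝ := Real.sqrt (A ^ 2 + B) with hR_def
  have hR2 : R ^ 2 = A ^ 2 + B := Real.sq_sqrt (by positivity)
  have hRA : -R ≤ A ∧ A ≤ R := by
    have h1 : |A| ≤ R := by
      rw [hR_def, ← Real.sqrt_sq_eq_abs]
      exact Real.sqrt_le_sqrt (by linarith)
    exact abs_le.mp h1
  set c : ℝ := (R - A) / (2 * (n:ℝ)) with hc_def
  have hc : 0 ≤ c := div_nonneg (by linarith [hRA.2]) (by linarith)
  set al : ℝ := a * (R + A) with hal_def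
  have hal : 0 ≤ al := mul_nonneg ha.le (by linarith [hRA.1])
  clear_value a A B R c al
  have key : al * c = 4 * ν₀ ^ 2 := by
    have h1 : al * c = a * (R ^ 2 - A ^ 2) / (2 * (n:ℝ)) := by
      rw [hal_def, hc_def]; ring
    rw [h1, hR2, hB_def, ha_def]
    field_simp
    ring
  have hAa : a * A = a * S₀ + 4 * η := by
    rw [hA_def]; field_simp
  have hsc : Real.sqrt c ^ 2 = c := Real.sq_sqrt hc
  have hsal : Real.sqrt al ^ 2 = al := Real.sq_sqrt hal
  have hprod : Real.sqrt al * Real.sqrt c = 2 * ν₀ := by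
    rw [← Real.sqrt_mul hal, key, show (4:ℝ) * ν₀ ^ 2 = (2 * ν₀) ^ 2 by ring]
    exact Real.sqrt_sq (by linarith)
  have hquad : ∀ t : ℝ, 0 ≤ t → 0 ≤ c + al * t ^ 2 - 4 * ν₀ * t := by
    intro t ht
    have h2 : Real.sqrt al * Real.sqrt c * t = 2 * ν₀ * t := by rw [hprod]
    nlinarith [sq_nonneg (Real.sqrt c - Real.sqrt al * t), hsc, hsal, h2]
  have hkey2 : ∀ t : ℝ,
      c * (1 + 2 * (n:ℝ) * ((n:ℝ) - 1) * μ ^ 2 * t ^ 2) -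
        (4 * ν₀ * t - 2 * (a * S₀ + 4 * η) * t ^ 2)
      = c + al * t ^ 2 - 4 * ν₀ * t := by
    intro t
    rw [← hAa, hal_def, ha_def, hc_def]
    field_simp
    ring
  have hD : ∀ t : ℝ, 0 < 1 + 2 * (n:ℝ) * ((n:ℝ) - 1) * μ ^ 2 * t ^ 2 := by
    intro t
    have h0 : 0 ≤ 2 * (n:ℝ) * ((n:ℝ) - 1) * μ ^ 2 * t ^ 2 :=
      mul_nonneg (mul_nonneg (mul_nonneg (by linarith) hn1.le) hμ2.le) (sq_nonneg t)
    linarith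
  have hmemS₀ : S₀ ∈ {y : ℝ | ∃ t ≥ (0 : ℝ),
      y = S₀ + (4 * ν₀ * t - 2 * (a * S₀ + 4 * η) * t ^ 2) /
            (1 + 2 * (n : ℝ) * ((n : ℝ) - 1) * μ ^ 2 * t ^ 2)} :=
    ⟨0, le_refl 0, by norm_num⟩
  have hub : ∀ y ∈ {y : ℝ | ∃ t ≥ (0 : ℝ),
      y = S₀ + (4 * ν₀ * t - 2 * (a * S₀ + 4 * η) * t ^ 2) /
            (1 + 2 * (n : ℝ) * ((n : ℝ) - 1) * μ ^ 2 * t ^ 2)}, y ≤ S₀ + c := by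
    rintro y ⟨t, ht, rfl⟩
    have h1 : (4 * ν₀ * t - 2 * (a * S₀ + 4 * η) * t ^ 2) /
        (1 + 2 * (n:ℝ) * ((n:ℝ) - 1) * μ ^ 2 * t ^ 2) ≤ c := by
      rw [div_le_iff₀ (hD t)]
      have := hkey2 t
      have := hquad t ht
      linarith
    linarith
  have hM : (1 / (2 * (n:ℝ))) * ((2 * (n:ℝ) - 1) * S₀ - 4 * η / a + R) = S₀ + c := by
    rw [hc_def, hA_def]
    field_simp
    ring
  rw [hM]
  apply le_antisymm
  · exact csSup_le ⟨S₀, hmemS₀⟩ hub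
  · rw [Real.le_sSup_iff ⟨S₀ + c, hub⟩ ⟨S₀, hmemS₀⟩]
    clear hub hmemS₀ hM hquad
    intro ε hε
    by_cases hal0 : al = 0
    · -- degenerate case: ν₀ = 0, supremum approached at infinity
      have h00 : (4:ℝ) * ν₀ ^ 2 = 0 := by rw [← key, hal0]; ring
      have hν : ν₀ = 0 := by
        have h01 : ν₀ ^ 2 = 0 := by linarith
        exact pow_eq_zero_iff two_ne_zero |>.mp h01
      have hnegε : (0:ℝ) < -ε := by linarith
      set t : ℝ := Real.sqrt (c / (2 * (n:ℝ) * a * (-ε))) with ht_def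
      have hden : 0 < 2 * (n:ℝ) * a * (-ε) := by positivity
      have ht : 0 ≤ t := Real.sqrt_nonneg _
      have ht2 : t ^ 2 = c / (2 * (n:ℝ) * a * (-ε)) :=
        Real.sq_sqrt (div_nonneg hc hden.le)
      have hDpos : 0 < 1 + 2 * (n:ℝ) * ((n:ℝ) - 1) * μ ^ 2 * t ^ 2 := hD t
      clear_value t
      have h6 : 2 * (n:ℝ) * ((n:ℝ) - 1) * μ ^ 2 = 2 * (n:ℝ) * a := by rw [ha_def]; ring
      have hDval : 1 + 2 * (n:ℝ) * ((n:ℝ) - 1) * μ ^ 2 * t ^ 2 = 1 + c / (-ε) := by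
        rw [ht2, h6]
        field_simp [hn0.ne', ha.ne', hε.ne]
      have halt : al * t ^ 2 = 0 := by rw [hal0]; ring
      have hN : 4 * ν₀ * t - 2 * (a * S₀ + 4 * η) * t ^ 2 =
          c * (1 + 2 * (n:ℝ) * ((n:ℝ) - 1) * μ ^ 2 * t ^ 2) - c := by
        have h2 := hkey2 t
        rw [hν] at h2 ⊢
        linarith
      refine ⟨S₀ + (4 * ν₀ * t - 2 * (a * S₀ + 4 * η) * t ^ 2) /
          (1 + 2 * (n:ℝ) * ((n:ℝ) - 1) * μ ^ 2 * t ^ 2), ⟨t, ht, rfl⟩, ?_⟩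
      rw [hN]
      have hεc : ε * (c / (-ε)) = -c := by rw [div_neg, mul_neg, mul_div_cancel₀ c hε.ne]
      have hlt : (c + ε) * (1 + 2 * (n:ℝ) * ((n:ℝ) - 1) * μ ^ 2 * t ^ 2) <
          c * (1 + 2 * (n:ℝ) * ((n:ℝ) - 1) * μ ^ 2 * t ^ 2) - c := by
        rw [hDval]
        have hE : (c + ε) * (1 + c / (-ε)) = c * (1 + c / (-ε)) - c + ε := by
          field_simp [hε.ne]
          ring
        rw [hE]
        linarith
      have h3 : c + ε < (c * (1 + 2 * (n:ℝ) * ((n:ℝ) - 1) * μ ^ 2 * t ^ 2) - c) /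
          (1 + 2 * (n:ℝ) * ((n:ℝ) - 1) * μ ^ 2 * t ^ 2) := by
        rw [lt_div_iff₀ hDpos]; exact hlt
      linarith
    · -- supremum attained
      have halpos : 0 < al := lt_of_le_of_ne hal (Ne.symm hal0)
      have hsalpos : 0 < Real.sqrt al := Real.sqrt_pos.mpr halpos
      set t : ℝ := Real.sqrt c / Real.sqrt al with ht_def
      have ht : 0 ≤ t := div_nonneg (Real.sqrt_nonneg _) (Real.sqrt_nonneg _)
      have ht2 : t ^ 2 = c / al := by rw [ht_def, div_pow, hsc, hsal]
      clear_value t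
      have h4 : 4 * ν₀ * t = 2 * c := by
        have h5 : (4 : ℝ) * ν₀ = 2 * (Real.sqrt al * Real.sqrt c) := by rw [hprod]; ring
        rw [ht_def, h5]
        field_simp [hsalpos.ne']
        linear_combination hsc
      have hzero : c + al * t ^ 2 - 4 * ν₀ * t = 0 := by
        rw [ht2, h4, mul_div_cancel₀ c hal0]
        ring
      have hN : 4 * ν₀ * t - 2 * (a * S₀ + 4 * η) * t ^ 2 =
          c * (1 + 2 * (n:ℝ) * ((n:ℝ) - 1) * μ ^ 2 * t ^ 2) := by
        have h2 := hkey2 t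
        linarith
      refine ⟨S₀ + (4 * ν₀ * t - 2 * (a * S₀ + 4 * η) * t ^ 2) /
          (1 + 2 * (n:ℝ) * ((n:ℝ) - 1) * μ ^ 2 * t ^ 2), ⟨t, ht, rfl⟩, ?_⟩
      rw [hN, mul_div_assoc, div_self (hD t).ne', mul_one]
      linarith
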